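/- arXiv:2409.14643 — 3 statements merged into one kernel-verified Lean document; each statement's English description precedes it below -/
import Mathlib

section
/- Every monic polynomial matrix equation X^n + A_1 X^{n−1} + ... + A_{n−1} X + A_n = 0 of degree n ≥ 1, where A_1,...,A_n are d×d circulant matrices over ℂ, has at least one solution X which is a d×d circulant matrix over ℂ. -/
open Matrix

def Cyc (d : ℕ) [NeZero d] : Matrix (Fin d) (Fin d) ℂ :=
  fun i j => if j = i + 1 then 1 else 0

def circ {d : ℕ} (a : Fin d → ℂ) : Matrix (Fin d) (Fin d) ℂ :=
  fun i j => a (j - i)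

def IsCirc {d : ℕ} (A : Matrix (Fin d) (Fin d) ℂ) : Prop :=
  ∃ a : Fin d → ℂ, A = circ a

noncomputable def ζ (d : ℕ) : ℂ := Complex.exp (2 * Real.pi * Complex.I / d)

noncomputable def Sm (d : ℕ) : Matrix (Fin d) (Fin d) ℂ :=
  fun i j => ζ d ^ ((i : ℕ) * (j : ℕ))

section aux

variable {d : ℕ} [NeZero d]

lemma zeta_prim : IsPrimitiveRoot (ζ d) d := by
  have := Complex.isPrimitiveRoot_exp d (NeZero.ne d)
  simpa [ζ] using this

lemma zeta_pow_d : ζ d ^ d = 1 := zeta_prim.pow_eq_one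

lemma zeta_pow_mod (a : ℕ) : ζ d ^ (a % d) = ζ d ^ a := by
  conv_rhs => rw [← Nat.div_add_mod a d]
  rw [pow_add, pow_mul, zeta_pow_d, one_pow, one_mul]

noncomputable def eig (a : Fin d → ℂ) : Fin d → ℂ :=
  fun j => ∑ m : Fin d, a m * ζ d ^ ((j : ℕ) * (m : ℕ))

lemma eig_eq (a : Fin d → ℂ) : eig a = Sm d *ᵥ a := by
  funext j
  simp [eig, Matrix.mulVec, dotProduct, Sm, mul_comm]

lemma circ_mul_Sm (a : Fin d → ℂ) :
    circ a * Sm d = Sm d * Matrix.diagonal (eig a) := by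
  ext i j
  rw [Matrix.mul_apply, Matrix.mul_diagonal,
    ← Equiv.sum_comp (Equiv.addLeft i) (fun k => circ a i k * Sm d k j),
    show Sm d i j * eig a j
      = ∑ m : Fin d, ζ d ^ ((i : ℕ) * (j : ℕ)) * (a m * ζ d ^ ((j : ℕ) * (m : ℕ))) from by
        rw [eig, Finset.mul_sum]; rfl]
  apply Finset.sum_congr rfl
  intro m _
  have he : (Equiv.addLeft i) m = i + m := rfl
  rw [he]
  have h1 : circ a i (i + m) = a m := by
    simp [circ]
  have h2 : Sm d (i + m) j
      = ζ d ^ ((i : ℕ) * (j : ℕ)) * ζ d ^ ((j : ℕ) * (m : ℕ)) := by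
    show ζ d ^ (((i + m : Fin d) : ℕ) * (j : ℕ)) = _
    have hv : ((i + m : Fin d) : ℕ) = ((i : ℕ) + (m : ℕ)) % d := by
      simp [Fin.add_def]
    rw [hv, pow_mul, zeta_pow_mod, ← pow_mul, add_mul, pow_add,
      mul_comm (m : ℕ) (j : ℕ)]
  rw [h1, h2]
  ring

lemma Sm_det_ne : (Sm d).det ≠ 0 := by
  have hS : Sm d = Matrix.vandermonde (fun i : Fin d => ζ d ^ (i : ℕ)) := by
    ext i j
    simp [Sm, Matrix.vandermonde, pow_mul]
  rw [hS, Matrix.det_vandermonde]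
  apply Finset.prod_ne_zero_iff.mpr
  intro i _
  apply Finset.prod_ne_zero_iff.mpr
  intro j hj
  rw [Finset.mem_Ioi] at hj
  apply sub_ne_zero.mpr
  intro h
  exact absurd (Fin.val_injective (zeta_prim.pow_inj j.isLt i.isLt h)) hj.ne'

lemma exists_scalar_root (n : ℕ) (hn : 1 ≤ n) (c : Fin n → ℂ) :
    ∃ z : ℂ, z ^ n + ∑ k : Fin n, c k * z ^ (n - 1 - (k : ℕ)) = 0 := by
  classical
  set p : Polynomial ℂ :=
    Polynomial.X ^ n + ∑ k : Fin n, Polynomial.C (c k) * Polynomial.X ^ (n - 1 - (k : ℕ))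
    with hp
  have hq : (∑ k : Fin n, Polynomial.C (c k) * Polynomial.X ^ (n - 1 - (k : ℕ))).degree
      < (Polynomial.X ^ n : Polynomial ℂ).degree := by
    rw [Polynomial.degree_X_pow]
    refine lt_of_le_of_lt (Polynomial.degree_sum_le _ _) ?_
    rw [Finset.sup_lt_iff (by exact_mod_cast WithBot.bot_lt_coe n)]
    intro k _
    refine lt_of_le_of_lt (Polynomial.degree_C_mul_X_pow_le _ _) ?_
    exact_mod_cast Nat.lt_of_le_of_lt (Nat.sub_le _ _) (Nat.sub_lt hn one_pos)
  have hdeg : p.degree = n := by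
    rw [hp, Polynomial.degree_add_eq_left_of_degree_lt hq, Polynomial.degree_X_pow]
  have hpos : 0 < p.degree := by
    rw [hdeg]; exact_mod_cast hn
  obtain ⟨z, hz⟩ := Complex.exists_root hpos
  refine ⟨z, ?_⟩
  have := hz
  simp only [Polynomial.IsRoot, hp, Polynomial.eval_add, Polynomial.eval_pow,
    Polynomial.eval_X, Polynomial.eval_finset_sum, Polynomial.eval_mul,
    Polynomial.eval_C] at this
  exact this

end aux

theorem stmt10 (d n : ℕ) (hn : 1 ≤ n) (A : Fin n → Matrix (Fin d) (Fin d) ℂ)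
    (hA : ∀ k, IsCirc (A k)) :
    ∃ X : Matrix (Fin d) (Fin d) ℂ, IsCirc X ∧
      X ^ n + ∑ k : Fin n, A k * X ^ (n - 1 - (k : ℕ)) = 0 := by
  classical
  rcases Nat.eq_zero_or_pos d with rfl | hd
  · refine ⟨0, ⟨fun i => 0, ?_⟩, ?_⟩
    · ext i j; exact i.elim0
    · ext i j; exact i.elim0
  haveI : NeZero d := ⟨hd.ne'⟩
  choose a ha using hA
  -- choose roots of the scalar polynomials at each frequency
  have hroot : ∀ j : Fin d, ∃ z : ℂ,
      z ^ n + ∑ k : Fin n, eig (a k) j * z ^ (n - 1 - (k : ℕ)) = 0 :=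
    fun j => exists_scalar_root n hn (fun k => eig (a k) j)
  choose t ht using hroot
  set c : Fin d → ℂ := (Sm d)⁻¹ *ᵥ t with hc
  set X : Matrix (Fin d) (Fin d) ℂ := circ c with hX
  have hdet : IsUnit (Sm d).det := isUnit_iff_ne_zero.mpr Sm_det_ne
  have hSSinv : Sm d * (Sm d)⁻¹ = 1 := Matrix.mul_nonsing_inv _ hdet
  have heigc : eig c = t := by
    rw [eig_eq, hc, Matrix.mulVec_mulVec, hSSinv, Matrix.one_mulVec]
  have hXS : X * Sm d = Sm d * Matrix.diagonal t := by
    rw [hX, circ_mul_Sm, heigc]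
  have hXpow : ∀ m : ℕ, X ^ m * Sm d = Sm d * Matrix.diagonal t ^ m := by
    intro m
    induction m with
    | zero => simp
    | succ m ih =>
        rw [pow_succ, pow_succ, Matrix.mul_assoc, hXS, ← Matrix.mul_assoc, ih,
          Matrix.mul_assoc]
  refine ⟨X, ⟨c, rfl⟩, ?_⟩
  have key : (X ^ n + ∑ k : Fin n, A k * X ^ (n - 1 - (k : ℕ))) * Sm d = 0 := by
    rw [Matrix.add_mul, Finset.sum_mul, hXpow]
    have hterm : ∀ k : Fin n,
        A k * X ^ (n - 1 - (k : ℕ)) * Sm d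
          = Sm d * (Matrix.diagonal (eig (a k)) * Matrix.diagonal t ^ (n - 1 - (k : ℕ))) := by
      intro k
      rw [Matrix.mul_assoc, hXpow, ← Matrix.mul_assoc, ha k, circ_mul_Sm,
        Matrix.mul_assoc]
    rw [Finset.sum_congr rfl (fun k _ => hterm k), ← Finset.mul_sum, ← Matrix.mul_add]
    have hdiag : Matrix.diagonal t ^ n
        + ∑ k : Fin n, Matrix.diagonal (eig (a k)) * Matrix.diagonal t ^ (n - 1 - (k : ℕ))
        = 0 := by
      have h1 : ∀ m : ℕ, (Matrix.diagonal t : Matrix (Fin d) (Fin d) ℂ) ^ m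
          = Matrix.diagonal (fun j => t j ^ m) := by
        intro m
        induction m with
        | zero => simp
        | succ m ih => rw [pow_succ, ih, Matrix.diagonal_mul_diagonal]; simp [pow_succ]
      simp only [h1, Matrix.diagonal_mul_diagonal]
      ext i j
      rcases eq_or_ne i j with rfl | hij
      · simp only [Matrix.add_apply, Matrix.sum_apply, Matrix.diagonal_apply_eq,
          Matrix.zero_apply]
        exact ht i
      · simp [Matrix.add_apply, Matrix.sum_apply, Matrix.diagonal_apply_ne _ hij]
    rw [hdiag, Matrix.mul_zero]
  calc X ^ n + ∑ k : Fin n, A k * X ^ (n - 1 - (k : ℕ))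
      = (X ^ n + ∑ k : Fin n, A k * X ^ (n - 1 - (k : ℕ))) * (Sm d * (Sm d)⁻¹) := by
        rw [hSSinv, Matrix.mul_one]
    _ = 0 := by rw [← Matrix.mul_assoc, key, Matrix.zero_mul]
end

section
/- Let A_k = circ(a_{k,0},...,a_{k,d−1}) for k = 1,...,n be circulant matrices over ℂ, and for i = 0,...,d−1 set b_k^{(i)} = Σ_{j=0}^{d−1} a_{k,j} r^{−ij} with r = e^{2πi/d}. Let n_i be the number of distinct complex roots of x^n + b_1^{(i)} x^{n−1} + ... + b_n^{(i)} = 0. Then the number of circulant solutions X of X^n + A_1 X^{n−1} + ... + A_n = 0 equals the product n_0 · n_1 · ... · n_{d−1}. -/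
set_option linter.unusedSectionVars false

open Matrix

section Aux

variable {d : ℕ} [NeZero d]

/-- `wd d` is the inverse primitive root `(ζ d)⁻¹`. -/
noncomputable def wd (d : ℕ) : ℂ := (ζ d)⁻¹

lemma wd_prim (d : ℕ) [NeZero d] : IsPrimitiveRoot (wd d) d :=
  (Complex.isPrimitiveRoot_exp d (NeZero.ne d)).inv

lemma wd_pow_d (d : ℕ) [NeZero d] : wd d ^ d = 1 := (wd_prim d).pow_eq_one

lemma wd_congr {x y : ℕ} (h : x % d = y % d) : wd d ^ x = wd d ^ y := by
  rw [pow_eq_pow_mod x (wd_pow_d d), pow_eq_pow_mod y (wd_pow_d d), h]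

/-- The DFT (Vandermonde) matrix with entries `wd^(i*j)`. -/
noncomputable def Vm (d : ℕ) : Matrix (Fin d) (Fin d) ℂ :=
  Matrix.vandermonde (fun i : Fin d => wd d ^ (i : ℕ))

lemma Vm_apply (i j : Fin d) : Vm d i j = wd d ^ ((i : ℕ) * (j : ℕ)) := by
  simp [Vm, Matrix.vandermonde, pow_mul]

lemma Vm_det_ne_zero : (Vm d).det ≠ 0 := by
  rw [Vm, Matrix.det_vandermonde, Finset.prod_ne_zero_iff]
  intro i _
  rw [Finset.prod_ne_zero_iff]
  intro j hj
  rw [Finset.mem_Ioi] at hj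
  refine sub_ne_zero.mpr fun hEq => ?_
  have := (wd_prim d).pow_inj j.isLt i.isLt hEq
  exact absurd (Fin.val_injective this) hj.ne'

/-- Eigenvector of circulant matrices belonging to row `i` of the DFT. -/
noncomputable def ev (i : Fin d) : Fin d → ℂ := fun j => wd d ^ ((i : ℕ) * (j : ℕ))

/-- The discrete Fourier transform of `a` : the vector of eigenvalues of `circ a`. -/
noncomputable def Fd (a : Fin d → ℂ) : Fin d → ℂ :=
  fun i => ∑ j : Fin d, a j * wd d ^ ((i : ℕ) * (j : ℕ))

lemma Fd_eq_mulVec (a : Fin d → ℂ) : Fd a = Vm d *ᵥ a := by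
  funext i
  simp [Fd, Matrix.mulVec, dotProduct, Vm_apply, mul_comm]

lemma Fd_inj : Function.Injective (Fd (d := d)) := by
  intro x y h
  have hu : IsUnit (Vm d).det := isUnit_iff_ne_zero.mpr Vm_det_ne_zero
  rw [Fd_eq_mulVec, Fd_eq_mulVec] at h
  have := congrArg (fun z => (Vm d)⁻¹ *ᵥ z) h
  simpa [Matrix.mulVec_mulVec, Matrix.nonsing_inv_mul _ hu, Matrix.one_mulVec] using this

lemma Fd_inv_eq (z : Fin d → ℂ) : Fd ((Vm d)⁻¹ *ᵥ z) = z := by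
  have hu : IsUnit (Vm d).det := isUnit_iff_ne_zero.mpr Vm_det_ne_zero
  rw [Fd_eq_mulVec]
  simp [Matrix.mulVec_mulVec, Matrix.mul_nonsing_inv _ hu, Matrix.one_mulVec]

lemma Vm_inv_Fd (x : Fin d → ℂ) : (Vm d)⁻¹ *ᵥ Fd x = x := by
  have hu : IsUnit (Vm d).det := isUnit_iff_ne_zero.mpr Vm_det_ne_zero
  rw [Fd_eq_mulVec]
  simp [Matrix.mulVec_mulVec, Matrix.nonsing_inv_mul _ hu, Matrix.one_mulVec]

lemma circ_mulVec (a : Fin d → ℂ) (i : Fin d) :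
    circ a *ᵥ ev i = Fd a i • ev i := by
  funext k
  simp only [Matrix.mulVec, dotProduct, circ, ev, Pi.smul_apply, smul_eq_mul, Fd]
  rw [← Equiv.sum_comp (Equiv.addRight k)
    (fun j : Fin d => a (j - k) * wd d ^ ((i : ℕ) * (j : ℕ))), Finset.sum_mul]
  refine Finset.sum_congr rfl fun m _ => ?_
  simp only [Equiv.coe_addRight, add_sub_cancel_right]
  rw [mul_assoc, ← pow_add, ← mul_add]
  congr 1
  apply wd_congr
  calc (i : ℕ) * ((m + k : Fin d) : ℕ) % d
      = (i : ℕ) * (((m : ℕ) + (k : ℕ)) % d) % d := by rw [Fin.val_add]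
    _ = (i : ℕ) * ((m : ℕ) + (k : ℕ)) % d :=
        Nat.ModEq.mul_left _ (Nat.mod_modEq _ d)

lemma circ_add (a b : Fin d → ℂ) : circ a + circ b = circ (a + b) := by
  funext i j; simp [circ]

lemma circ_zero : circ (0 : Fin d → ℂ) = 0 := by funext i j; simp [circ]

lemma circ_sum {ι : Type*} (s : Finset ι) (f : ι → Fin d → ℂ) :
    ∑ k ∈ s, circ (f k) = circ (fun t => ∑ k ∈ s, f k t) := by
  funext i j; simp [circ, Matrix.sum_apply]

lemma circ_mul (a b : Fin d → ℂ) :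
    circ a * circ b = circ (fun t => ∑ m : Fin d, a m * b (t - m)) := by
  funext i j
  simp only [circ, Matrix.mul_apply]
  rw [← Equiv.sum_comp (Equiv.addRight i)
    (fun k : Fin d => a (k - i) * b (j - k))]
  refine Finset.sum_congr rfl fun m _ => ?_
  simp only [Equiv.coe_addRight, add_sub_cancel_right]
  congr 1
  rw [sub_sub, add_comm i m]

lemma circ_one : (1 : Matrix (Fin d) (Fin d) ℂ) = circ (fun t => if t = 0 then 1 else 0) := by
  funext i j
  simp [circ, Matrix.one_apply, sub_eq_zero, eq_comm]

lemma circ_pow (x : Fin d → ℂ) (m : ℕ) : ∃ c, circ x ^ m = circ c := by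
  induction m with
  | zero => exact ⟨_, circ_one⟩
  | succ m ih =>
    obtain ⟨c, hc⟩ := ih
    exact ⟨_, by rw [pow_succ, hc, circ_mul]⟩

lemma circ_inj : Function.Injective (circ (d := d)) := by
  intro a b h
  funext j
  have := congrFun (congrFun h 0) j
  simpa [circ] using this

lemma sum_mulVec' {ι : Type*} (s : Finset ι) (A : ι → Matrix (Fin d) (Fin d) ℂ)
    (v : Fin d → ℂ) : (∑ k ∈ s, A k) *ᵥ v = ∑ k ∈ s, A k *ᵥ v := by
  funext j
  simp only [Matrix.mulVec, dotProduct, Matrix.sum_apply, Finset.sum_apply,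
    Finset.sum_mul]
  exact Finset.sum_comm

lemma circ_pow_mulVec (x : Fin d → ℂ) (m : ℕ) (i : Fin d) :
    circ x ^ m *ᵥ ev i = (Fd x i) ^ m • ev i := by
  induction m with
  | zero => simp [Matrix.one_mulVec]
  | succ m ih =>
    rw [pow_succ, ← Matrix.mulVec_mulVec, circ_mulVec, Matrix.mulVec_smul, ih,
      smul_smul, pow_succ]
    ring_nf

lemma key_mulVec (x : Fin d → ℂ) (n : ℕ) (a : Fin n → Fin d → ℂ) (i : Fin d) :
    (circ x ^ n + ∑ k : Fin n, circ (a k) * circ x ^ (n - 1 - (k : ℕ))) *ᵥ ev i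
      = ((Fd x i) ^ n + ∑ k : Fin n, Fd (a k) i * (Fd x i) ^ (n - 1 - (k : ℕ))) • ev i := by
  rw [Matrix.add_mulVec, circ_pow_mulVec, add_smul, Finset.sum_smul]
  congr 1
  rw [sum_mulVec']
  refine Finset.sum_congr rfl fun k _ => ?_
  rw [← Matrix.mulVec_mulVec, circ_pow_mulVec, Matrix.mulVec_smul, circ_mulVec,
    smul_smul, mul_comm]

end Aux

theorem stmt12 (d n : ℕ) [NeZero d] (hn : 1 ≤ n) (a : Fin n → Fin d → ℂ) :
    {X : Matrix (Fin d) (Fin d) ℂ | IsCirc X ∧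
        X ^ n + ∑ k : Fin n, circ (a k) * X ^ (n - 1 - (k : ℕ)) = 0}.ncard
      = ∏ i : Fin d,
          ((Polynomial.X ^ n + ∑ k : Fin n,
              Polynomial.C (∑ j : Fin d, a k j * ((ζ d)⁻¹) ^ ((i : ℕ) * (j : ℕ))) *
                Polynomial.X ^ (n - 1 - (k : ℕ)) : Polynomial ℂ)).roots.toFinset.card := by
  classical
  set p : Fin d → Polynomial ℂ := fun i =>
    Polynomial.X ^ n + ∑ k : Fin n, Polynomial.C (Fd (a k) i) *
      Polynomial.X ^ (n - 1 - (k : ℕ)) with hp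
  have hrhs : ∀ i : Fin d, (Polynomial.X ^ n + ∑ k : Fin n,
      Polynomial.C (∑ j : Fin d, a k j * ((ζ d)⁻¹) ^ ((i : ℕ) * (j : ℕ))) *
        Polynomial.X ^ (n - 1 - (k : ℕ)) : Polynomial ℂ) = p i := fun i => rfl
  have hpeval : ∀ (i : Fin d) (z : ℂ),
      (p i).eval z = z ^ n + ∑ k : Fin n, Fd (a k) i * z ^ (n - 1 - (k : ℕ)) := by
    intro i z
    simp [hp, Polynomial.eval_finset_sum]
  have hpne : ∀ i, p i ≠ 0 := by
    intro i h
    have hc : (p i).coeff n = 1 := by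
      rw [hp]
      simp only [Polynomial.coeff_add, Polynomial.coeff_X_pow,
        Polynomial.finset_sum_coeff, Polynomial.coeff_C_mul]
      rw [if_pos trivial]
      have : ∀ k : Fin n,
          Fd (a k) i * (if n = n - 1 - (k : ℕ) then (1 : ℂ) else 0) = 0 := by
        intro k
        rw [if_neg (by omega), mul_zero]
      rw [Finset.sum_congr rfl fun k _ => this k]
      simp
    rw [h] at hc
    simp at hc
  have hmemT : ∀ z : Fin d → ℂ,
      (z ∈ (↑(Fintype.piFinset fun i => (p i).roots.toFinset) : Set (Fin d → ℂ)))
        ↔ ∀ i, (p i).eval (z i) = 0 := by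
    intro z
    rw [Finset.mem_coe, Fintype.mem_piFinset]
    refine forall_congr' fun i => ?_
    rw [Multiset.mem_toFinset, Polynomial.mem_roots (hpne i)]
    simp [Polynomial.IsRoot]
  have hginj : Function.Injective (fun z : Fin d → ℂ => circ ((Vm d)⁻¹ *ᵥ z)) := by
    intro z z' h
    have h2 := circ_inj h
    calc z = Fd ((Vm d)⁻¹ *ᵥ z) := (Fd_inv_eq z).symm
      _ = Fd ((Vm d)⁻¹ *ᵥ z') := by rw [h2]
      _ = z' := Fd_inv_eq z'
  have hSeq : {X : Matrix (Fin d) (Fin d) ℂ | IsCirc X ∧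
        X ^ n + ∑ k : Fin n, circ (a k) * X ^ (n - 1 - (k : ℕ)) = 0}
      = (fun z : Fin d → ℂ => circ ((Vm d)⁻¹ *ᵥ z)) ''
          (↑(Fintype.piFinset fun i => (p i).roots.toFinset)) := by
    ext X
    simp only [Set.mem_setOf_eq, Set.mem_image]
    constructor
    · rintro ⟨⟨x, rfl⟩, heq⟩
      refine ⟨Fd x, ?_, ?_⟩
      · rw [hmemT]
        intro i
        have h2 := congrArg (fun M => M *ᵥ ev i) heq
        simp only [key_mulVec, Matrix.zero_mulVec] at h2
        have h0 := congrFun h2 0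
        rw [hpeval]
        simpa [ev] using h0
      · rw [Vm_inv_Fd]
    · rintro ⟨z, hzT, rfl⟩
      set x : Fin d → ℂ := (Vm d)⁻¹ *ᵥ z with hx
      have hFx : Fd x = z := Fd_inv_eq z
      refine ⟨⟨x, rfl⟩, ?_⟩
      obtain ⟨cn, hcn⟩ := circ_pow x n
      have hterm : ∀ k : Fin n, ∃ c, circ (a k) * circ x ^ (n - 1 - (k : ℕ)) = circ c := by
        intro k
        obtain ⟨c, hc⟩ := circ_pow x (n - 1 - (k : ℕ))
        exact ⟨_, by rw [hc, circ_mul]⟩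
      choose f hf using hterm
      have hcirc : circ x ^ n + ∑ k : Fin n, circ (a k) * circ x ^ (n - 1 - (k : ℕ))
          = circ (cn + fun t => ∑ k : Fin n, f k t) := by
        rw [hcn, Finset.sum_congr rfl fun k _ => hf k, circ_sum, circ_add]
      set c : Fin d → ℂ := cn + fun t => ∑ k : Fin n, f k t with hcdef
      rw [hcirc]
      have hc0 : Fd c = 0 := by
        funext i
        have h1 : circ c *ᵥ ev i = (0 : ℂ) • ev i := by
          rw [← hcirc, key_mulVec]
          congr 1
          rw [hmemT] at hzT
          have h3 := hzT i
          rw [hpeval] at h3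
          rw [← hFx] at h3
          exact h3
        rw [circ_mulVec] at h1
        have h0 := congrFun h1 0
        simpa [ev] using h0
      have hc : c = 0 := Fd_inj (by rw [hc0]; funext i; simp [Fd])
      rw [hc, circ_zero]
  rw [hSeq, Set.ncard_image_of_injective _ hginj, Set.ncard_coe_finset,
    Fintype.card_piFinset]
  exact Finset.prod_congr rfl fun i _ => by rw [hrhs i]
end

section
/- For the equation X^n + A_1 X^{n−1} + ... + A_n = 0 with circulant d×d complex coefficients, the number of circulant solutions equals n^d if and only if for each i = 0,...,d−1 the scalar polynomial x^n + b_1^{(i)} x^{n−1} + ... + b_n^{(i)} has n distinct complex roots, where b_k^{(i)} = Σ_j a_{k,j} r^{−ij} and A_k = circ(a_{k,0},...,a_{k,d−1}). -/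
open Matrix

set_option linter.unusedSectionVars false
set_option maxHeartbeats 1000000

namespace St18

variable (d : ℕ) [NeZero d]

lemma hprim : IsPrimitiveRoot (ζ d) d := Complex.isPrimitiveRoot_exp d (NeZero.ne d)

lemma r_pow_d : ζ d ^ d = 1 := (hprim d).pow_eq_one

lemma r_pow_dvd {m : ℕ} (h : d ∣ m) : ζ d ^ m = 1 := by
  obtain ⟨c, rfl⟩ := h
  rw [pow_mul, r_pow_d, one_pow]

lemma pow_mod {w : ℂ} (hw : w ^ d = 1) (m : ℕ) : w ^ (m % d) = w ^ m := by
  conv_rhs => rw [← Nat.div_add_mod m d]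
  rw [pow_add, pow_mul, hw, one_pow, one_mul]

noncomputable def vv : Fin d → ℂ := fun i => ζ d ^ (i : ℕ)

lemma vv_pow_d (i : Fin d) : vv d i ^ d = 1 := by
  rw [vv, ← pow_mul, mul_comm, pow_mul, r_pow_d, one_pow]

lemma vv_inj : Function.Injective (vv d) := fun i j h =>
  Fin.ext ((hprim d).pow_inj i.isLt j.isLt h)

noncomputable def F (x : Fin d → ℂ) : Fin d → ℂ := (Matrix.vandermonde (vv d)).mulVec x

lemma F_apply (x : Fin d → ℂ) (i : Fin d) : F d x i = ∑ j : Fin d, vv d i ^ (j : ℕ) * x j := by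
  simp [F, Matrix.mulVec, dotProduct, Matrix.vandermonde]

lemma det_unit : IsUnit (Matrix.vandermonde (vv d)).det := by
  rw [isUnit_iff_ne_zero, Matrix.det_vandermonde]
  apply Finset.prod_ne_zero_iff.mpr
  intro i _
  apply Finset.prod_ne_zero_iff.mpr
  intro j hj
  have : i ≠ j := (Finset.mem_Ioi.mp hj).ne
  exact sub_ne_zero.mpr fun h => this (vv_inj d h).symm

lemma F_inj : Function.Injective (F d) := by
  intro x y h
  have := congrArg ((Matrix.vandermonde (vv d))⁻¹.mulVec) h
  simpa [F, Matrix.mulVec_mulVec, Matrix.nonsing_inv_mul _ (det_unit d),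
    Matrix.one_mulVec] using this

lemma F_surj : Function.Surjective (F d) := by
  intro y
  refine ⟨(Matrix.vandermonde (vv d))⁻¹.mulVec y, ?_⟩
  rw [F, Matrix.mulVec_mulVec, Matrix.mul_nonsing_inv _ (det_unit d), Matrix.one_mulVec]

noncomputable def conv (x y : Fin d → ℂ) : Fin d → ℂ := fun t => ∑ s, x s * y (t - s)

noncomputable def delta : Fin d → ℂ := fun t => if t = 0 then 1 else 0

noncomputable def cpow (x : Fin d → ℂ) : ℕ → (Fin d → ℂ)
  | 0 => delta d
  | m + 1 => conv d x (cpow x m)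

lemma circ_inj : Function.Injective (circ (d := d)) := by
  intro x y h
  funext j
  have := congrFun (congrFun h 0) j
  simpa [circ] using this

lemma circ_zero : circ (0 : Fin d → ℂ) = 0 := by
  ext i j; simp [circ]

lemma circ_add (x y : Fin d → ℂ) : circ (x + y) = circ x + circ y := by
  ext i j; simp [circ]

lemma circ_sum {ι : Type*} (s : Finset ι) (f : ι → Fin d → ℂ) :
    circ (∑ k ∈ s, f k) = ∑ k ∈ s, circ (f k) := by
  ext i j
  simp [circ, Matrix.sum_apply]

lemma circ_one : circ (delta d) = 1 := by
  ext i j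
  simp only [circ, delta, Matrix.one_apply, sub_eq_zero]
  by_cases h : i = j <;> simp [h, eq_comm]

lemma circ_mul (x y : Fin d → ℂ) : circ x * circ y = circ (conv d x y) := by
  ext i j
  simp only [Matrix.mul_apply, circ, conv]
  apply Fintype.sum_equiv (Equiv.subRight i)
  intro k
  simp only [Equiv.subRight_apply]
  rw [sub_sub_sub_cancel_right]

lemma circ_cpow (x : Fin d → ℂ) (m : ℕ) : circ (cpow d x m) = circ x ^ m := by
  induction m with
  | zero => rw [cpow, circ_one, pow_zero]
  | succ m ih => rw [cpow, ← circ_mul, ih, pow_succ']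

lemma val_pow_add {w : ℂ} (hw : w ^ d = 1) (u s : Fin d) :
    w ^ ((u + s : Fin d) : ℕ) = w ^ (u : ℕ) * w ^ (s : ℕ) := by
  rw [Fin.val_add, pow_mod d hw, pow_add]

lemma F_conv (x y : Fin d → ℂ) (i : Fin d) :
    F d (conv d x y) i = F d x i * F d y i := by
  have hw := vv_pow_d d i
  rw [F_apply, F_apply, F_apply]
  calc ∑ t : Fin d, vv d i ^ (t : ℕ) * conv d x y t
      = ∑ t : Fin d, ∑ s : Fin d, vv d i ^ (t : ℕ) * (x s * y (t - s)) := by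
        simp [conv, Finset.mul_sum]
    _ = ∑ s : Fin d, ∑ t : Fin d, vv d i ^ (t : ℕ) * (x s * y (t - s)) := Finset.sum_comm
    _ = ∑ s : Fin d, ∑ u : Fin d, vv d i ^ ((u + s : Fin d) : ℕ) * (x s * y u) := by
        refine Finset.sum_congr rfl fun s _ => ?_
        apply Fintype.sum_equiv (Equiv.subRight s)
        intro t
        simp only [Equiv.subRight_apply]
        rw [sub_add_cancel]
    _ = ∑ s : Fin d, ∑ u : Fin d, (vv d i ^ (s : ℕ) * x s) * (vv d i ^ (u : ℕ) * y u) := by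
        refine Finset.sum_congr rfl fun s _ => Finset.sum_congr rfl fun u _ => ?_
        rw [val_pow_add d hw]; ring
    _ = (∑ s : Fin d, vv d i ^ (s : ℕ) * x s) * (∑ u : Fin d, vv d i ^ (u : ℕ) * y u) := by
        rw [Finset.sum_mul_sum]

lemma F_delta (i : Fin d) : F d (delta d) i = 1 := by
  rw [F_apply]
  simp [delta, mul_ite, Finset.sum_ite_eq']

lemma F_cpow (x : Fin d → ℂ) (m : ℕ) (i : Fin d) :
    F d (cpow d x m) i = (F d x i) ^ m := by
  induction m with
  | zero => rw [cpow, F_delta, pow_zero]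
  | succ m ih => rw [cpow, F_conv, ih, pow_succ']

lemma F_add (x y : Fin d → ℂ) : F d (x + y) = F d x + F d y := by
  simp [F, Matrix.mulVec_add]

lemma F_zero : F d (0 : Fin d → ℂ) = 0 := by
  simp [F]

lemma F_sum {ι : Type*} (s : Finset ι) (f : ι → Fin d → ℂ) (i : Fin d) :
    F d (∑ k ∈ s, f k) i = ∑ k ∈ s, F d (f k) i := by
  simp only [F_apply, Finset.sum_apply, Finset.mul_sum]
  exact Finset.sum_comm

variable (n : ℕ) (a : Fin n → Fin d → ℂ)

noncomputable def myPoly (i : Fin d) : Polynomial ℂ :=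
  Polynomial.X ^ n + ∑ k : Fin n, Polynomial.C (F d (a k) i) * Polynomial.X ^ (n - 1 - (k : ℕ))

lemma sum_deg_lt (i : Fin d) :
    (∑ k : Fin n, Polynomial.C (F d (a k) i) * Polynomial.X ^ (n - 1 - (k : ℕ))).degree
      < (Polynomial.X ^ n : Polynomial ℂ).degree := by
  rw [Polynomial.degree_X_pow]
  apply lt_of_le_of_lt (Polynomial.degree_sum_le _ _)
  rw [Finset.sup_lt_iff (by exact WithBot.bot_lt_coe n)]
  intro k _
  apply lt_of_le_of_lt (Polynomial.degree_C_mul_X_pow_le _ _)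
  have hlt : n - 1 - (k : ℕ) < n := by omega
  exact WithBot.coe_lt_coe.mpr hlt

lemma myPoly_monic (i : Fin d) : (myPoly d n a i).Monic :=
  (Polynomial.monic_X_pow n).add_of_left (sum_deg_lt d n a i)

lemma myPoly_natDegree (i : Fin d) : (myPoly d n a i).natDegree = n := by
  apply Polynomial.natDegree_eq_of_degree_eq_some
  rw [myPoly, Polynomial.degree_add_eq_left_of_degree_lt (sum_deg_lt d n a i),
    Polynomial.degree_X_pow]

lemma card_le (i : Fin d) : (myPoly d n a i).roots.toFinset.card ≤ n :=
  le_trans (Multiset.toFinset_card_le _)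
    (le_trans (Polynomial.card_roots' _) (le_of_eq (myPoly_natDegree d n a i)))

lemma eval_myPoly (i : Fin d) (t : ℂ) :
    (myPoly d n a i).eval t = t ^ n + ∑ k : Fin n, F d (a k) i * t ^ (n - 1 - (k : ℕ)) := by
  simp [myPoly, Polynomial.eval_finset_sum]

lemma key_pow (i j : Fin d) :
    vv d (-i) ^ (j : ℕ) = ((ζ d)⁻¹) ^ ((i : ℕ) * (j : ℕ)) := by
  rw [inv_pow]
  refine eq_inv_of_mul_eq_one_left ?_
  rw [vv, ← pow_mul, ← pow_add, ← add_mul]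
  apply r_pow_dvd
  apply Dvd.dvd.mul_right
  apply Nat.dvd_of_mod_eq_zero
  have h0 : ((-i + i : Fin d) : ℕ) = 0 := by simp
  rwa [Fin.val_add] at h0

lemma stmt_eq_myPoly (i : Fin d) :
    (Polynomial.X ^ n + ∑ k : Fin n,
        Polynomial.C (∑ j : Fin d, a k j * ((ζ d)⁻¹) ^ ((i : ℕ) * (j : ℕ))) *
          Polynomial.X ^ (n - 1 - (k : ℕ)) : Polynomial ℂ)
      = myPoly d n a (-i) := by
  rw [myPoly]
  congr 1
  refine Finset.sum_congr rfl fun k _ => ?_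
  congr 2
  rw [F_apply]
  refine Finset.sum_congr rfl fun j _ => ?_
  rw [key_pow d i j, mul_comm]

lemma prod_iff (hn : 1 ≤ n) (c : Fin d → ℕ) (hc : ∀ i, c i ≤ n) :
    ∏ i, c i = n ^ d ↔ ∀ i, c i = n := by
  have hnd : n ^ d = ∏ _i : Fin d, n := by simp
  constructor
  · intro h
    by_contra hcon
    push_neg at hcon
    obtain ⟨i0, hi0⟩ := hcon
    by_cases hz : ∀ i, 0 < c i
    · have : ∏ i, c i < ∏ _i : Fin d, n := by
        refine Finset.prod_lt_prod (fun i _ => hz i) (fun i _ => hc i) ?_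
        exact ⟨i0, Finset.mem_univ i0, lt_of_le_of_ne (hc i0) hi0⟩
      rw [h, hnd] at this
      exact lt_irrefl _ this
    · push_neg at hz
      obtain ⟨i1, hi1⟩ := hz
      have : ∏ i, c i = 0 := Finset.prod_eq_zero (Finset.mem_univ i1) (by omega)
      rw [h] at this
      exact (pow_pos (by omega) d).ne' this
  · intro h
    rw [hnd]
    exact Finset.prod_congr rfl fun i _ => h i

noncomputable def G (x : Fin d → ℂ) : Fin d → ℂ :=
  cpow d x n + ∑ k : Fin n, conv d (a k) (cpow d x (n - 1 - (k : ℕ)))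

lemma circ_G (x : Fin d → ℂ) :
    circ (G d n a x) = circ x ^ n + ∑ k : Fin n, circ (a k) * circ x ^ (n - 1 - (k : ℕ)) := by
  rw [G, circ_add, circ_cpow, circ_sum]
  congr 1
  refine Finset.sum_congr rfl fun k _ => ?_
  rw [← circ_mul, circ_cpow]

lemma F_G (x : Fin d → ℂ) (i : Fin d) :
    F d (G d n a x) i = (myPoly d n a i).eval (F d x i) := by
  rw [G, eval_myPoly]
  have : F d (cpow d x n + ∑ k : Fin n, conv d (a k) (cpow d x (n - 1 - (k : ℕ))))
      = F d (cpow d x n) + F d (∑ k : Fin n, conv d (a k) (cpow d x (n - 1 - (k : ℕ)))) :=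
    F_add d _ _
  rw [this]
  simp only [Pi.add_apply]
  rw [F_cpow, F_sum]
  congr 1
  refine Finset.sum_congr rfl fun k _ => ?_
  rw [F_conv, F_cpow]

lemma eqn_iff (x : Fin d → ℂ) :
    circ x ^ n + ∑ k : Fin n, circ (a k) * circ x ^ (n - 1 - (k : ℕ)) = 0 ↔
    ∀ i, (myPoly d n a i).eval (F d x i) = 0 := by
  rw [← circ_G, ← circ_zero]
  rw [(circ_inj d).eq_iff]
  constructor
  · intro h i
    rw [← F_G, h, F_zero]
    rfl
  · intro h
    apply F_inj d
    rw [F_zero]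
    funext i
    rw [F_G]
    exact h i

end St18

theorem stmt18 (d n : ℕ) [NeZero d] (hn : 1 ≤ n) (a : Fin n → Fin d → ℂ) :
    {X : Matrix (Fin d) (Fin d) ℂ | IsCirc X ∧
        X ^ n + ∑ k : Fin n, circ (a k) * X ^ (n - 1 - (k : ℕ)) = 0}.ncard = n ^ d ↔
    ∀ i : Fin d,
      ((Polynomial.X ^ n + ∑ k : Fin n,
          Polynomial.C (∑ j : Fin d, a k j * ((ζ d)⁻¹) ^ ((i : ℕ) * (j : ℕ))) *
            Polynomial.X ^ (n - 1 - (k : ℕ)) : Polynomial ℂ)).roots.toFinset.card = n := by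
  classical
  set U : Set (Fin d → ℂ) :=
    ↑(Fintype.piFinset fun i => (St18.myPoly d n a i).roots.toFinset) with hU
  have hsets : {X : Matrix (Fin d) (Fin d) ℂ | IsCirc X ∧
      X ^ n + ∑ k : Fin n, circ (a k) * X ^ (n - 1 - (k : ℕ)) = 0}
      = circ '' (St18.F d ⁻¹' U) := by
    ext X
    simp only [Set.mem_setOf_eq, Set.mem_image, Set.mem_preimage, hU,
      Finset.coe_sort_coe, Finset.mem_coe, Fintype.mem_piFinset, Multiset.mem_toFinset,
      Polynomial.mem_roots']
    constructor
    · rintro ⟨⟨x, rfl⟩, heq⟩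
      refine ⟨x, fun i => ⟨(St18.myPoly_monic d n a i).ne_zero, ?_⟩, rfl⟩
      exact (St18.eqn_iff d n a x).mp heq i
    · rintro ⟨x, hx, rfl⟩
      exact ⟨⟨x, rfl⟩, (St18.eqn_iff d n a x).mpr fun i => (hx i).2⟩
  rw [hsets, Set.ncard_image_of_injective _ (St18.circ_inj d)]
  have hbij : Function.Bijective (St18.F d) := ⟨St18.F_inj d, St18.F_surj d⟩
  set e := Equiv.ofBijective (St18.F d) hbij with he
  have happly : ∀ z, e z = St18.F d z := fun z => by rw [he]; rfl
  have hpre : St18.F d ⁻¹' U = ⇑e.symm '' U := by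
    ext z
    simp only [Set.mem_preimage, Set.mem_image]
    constructor
    · intro h
      exact ⟨St18.F d z, h, by rw [← happly, Equiv.symm_apply_apply]⟩
    · rintro ⟨y, hy, rfl⟩
      have hy2 : St18.F d (e.symm y) = y := by rw [← happly, Equiv.apply_symm_apply]
      rwa [hy2]
  rw [hpre, Set.ncard_image_of_injective _ e.symm.injective, hU, Set.ncard_coe_finset,
    Fintype.card_piFinset]
  rw [St18.prod_iff d n hn _ (fun i => St18.card_le d n a i)]
  constructor
  · intro h i
    rw [St18.stmt_eq_myPoly d n a i]
    exact h (-i)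
  · intro h i
    have := h (-i)
    rw [St18.stmt_eq_myPoly d n a (-i), neg_neg] at this
    exact this
end
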